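/- Let H be a connected finite simple graph and f : 𝒦_H → ℕ a function such that every edge of H belongs to some complete subgraph K of H with f(K) ≥ 1. Then the bipartization B_f(H) is a tree if and only if all of the following hold: (1) f(K) ≤ 1 for every non-trivial complete subgraph K of H; (2) H is a block graph; (3) for every non-trivial complete subgraph K of H, f(K) = 1 if and only if K is a block of H. -/

import Mathlib

/-- `K` is the vertex set of a (nonempty) complete subgraph (clique) of `H`. -/
def IsCliqueF {V : Type*} (H : SimpleGraph V) (K : Finset V) : Prop :=
  K.Nonempty ∧ ∀ x ∈ K, ∀ y ∈ K, x ≠ y → H.Adj x y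

instance {V : Type*} [DecidableEq V] (H : SimpleGraph V) [DecidableRel H.Adj] :
    DecidablePred (IsCliqueF H) := fun K => by
  unfold IsCliqueF; infer_instance

/-- The family `𝒦_H` of all complete subgraphs (cliques) of `H`. -/
abbrev CliqueSet {V : Type*} (H : SimpleGraph V) := {K : Finset V // IsCliqueF H K}

/-- The vertex type of the bipartization `B_f(H)`: the partite set `A` is `V_H`
(the `Sum.inl` part) and the partite set `B` is `⋃_K 𝓕_K`, where
`𝓕_K = {(K,1),…,(K,f K)}` is encoded as `Σ K, Fin (f K)` (the `Sum.inr` part). -/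
abbrev BVert {V : Type*} (H : SimpleGraph V) (f : Finset V → ℕ) :=
  V ⊕ (Σ K : CliqueSet H, Fin (f K.1))

/-- The bipartization `B_f(H)` of `H` with respect to `f`: a vertex `x ∈ A` is
adjacent to `(K, i) ∈ B` iff `x` is a vertex of `K`. -/
def Bip {V : Type*} (H : SimpleGraph V) (f : Finset V → ℕ) : SimpleGraph (BVert H f) where
  Adj a b :=
    (∃ (x : V) (p : Σ K : CliqueSet H, Fin (f K.1)),
        a = Sum.inl x ∧ b = Sum.inr p ∧ x ∈ p.1.1) ∨
    (∃ (x : V) (p : Σ K : CliqueSet H, Fin (f K.1)),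
        b = Sum.inl x ∧ a = Sum.inr p ∧ x ∈ p.1.1)
  symm := by
    constructor
    rintro a b (⟨x, p, rfl, rfl, hx⟩ | ⟨x, p, rfl, rfl, hx⟩)
    · exact Or.inr ⟨x, p, rfl, rfl, hx⟩
    · exact Or.inl ⟨x, p, rfl, rfl, hx⟩
  loopless := by
    constructor
    rintro a (⟨x, p, h1, h2, _⟩ | ⟨x, p, h1, h2, _⟩) <;> subst h1 <;> simp at h2

/-- `D` is a dominating set of `G`. -/
def IsDomSet {W : Type*} (G : SimpleGraph W) (D : Set W) : Prop :=
  ∀ v ∉ D, ∃ u ∈ D, G.Adj u v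

/-- The domination number `γ(G)`. -/
noncomputable def domNum {W : Type*} (G : SimpleGraph W) : ℕ :=
  sInf {n | ∃ D : Set W, IsDomSet G D ∧ D.ncard = n}

/-- `C` is a covering (vertex cover) set of `G`. -/
def IsCoverSet {W : Type*} (G : SimpleGraph W) (C : Set W) : Prop :=
  ∀ u v, G.Adj u v → u ∈ C ∨ v ∈ C

/-- The covering number `β(G)`. -/
noncomputable def coverNum {W : Type*} (G : SimpleGraph W) : ℕ :=
  sInf {n | ∃ C : Set W, IsCoverSet G C ∧ C.ncard = n}

/-- A leaf is a vertex of degree one. -/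
def IsLeaf {W : Type*} (G : SimpleGraph W) (v : W) : Prop := (G.neighborSet v).ncard = 1

/-- A support vertex is a vertex adjacent to a leaf. -/
def IsSupport {W : Type*} (G : SimpleGraph W) (v : W) : Prop := ∃ u, G.Adj v u ∧ IsLeaf G u

/-- A weak support is a vertex adjacent to exactly one leaf. -/
def IsWeakSupport {W : Type*} (G : SimpleGraph W) (v : W) : Prop :=
  {u | G.Adj v u ∧ IsLeaf G u}.ncard = 1

/-- `S` induces a block of `G`: a maximal connected subgraph without a cutvertex. -/
def IsBlock {W : Type*} (G : SimpleGraph W) (S : Set W) : Prop :=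
  S.Nonempty ∧ (G.induce S).Connected ∧
    (∀ v ∈ S, S = {v} ∨ (G.induce (S \ {v})).Connected) ∧
    ∀ T : Set W, S ⊆ T → (G.induce T).Connected →
      (∀ v ∈ T, T = {v} ∨ (G.induce (T \ {v})).Connected) → S = T

section Aux
open SimpleGraph Sum

variable {V : Type*} {H : SimpleGraph V}

private lemma reach_mono {S S' : Set V} (hss : S ⊆ S') {u v : ↥S}
    (h : (H.induce S).Reachable u v) :
    (H.induce S').Reachable ⟨u.1, hss u.2⟩ ⟨v.1, hss v.2⟩ :=
  h.map (induceHomOfLE H hss).toHom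

private lemma conn_star {S : Set V} {z : V} (hz : z ∈ S)
    (h : ∀ u ∈ S, u = z ∨ H.Adj u z) : (H.induce S).Connected := by
  rw [connected_iff_exists_forall_reachable]
  have key : ∀ u : ↥S, (H.induce S).Reachable u ⟨z, hz⟩ := by
    rintro ⟨u, hu⟩
    rcases h u hu with rfl | hadj
    · exact Reachable.refl _
    · exact SimpleGraph.Adj.reachable (by exact hadj)
  exact ⟨⟨z, hz⟩, fun w => (key w).symm⟩

private lemma walk_reach {a b : V} (q : H.Walk a b) :
    ∀ u (hu : u ∈ q.support),
      (H.induce {v | v ∈ q.support}).Reachable ⟨a, q.start_mem_support⟩ ⟨u, hu⟩ := by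
  induction q with
  | nil =>
    intro u hu
    simp only [SimpleGraph.Walk.support_nil, List.mem_singleton] at hu
    subst hu; exact Reachable.refl _
  | @cons a c b hadj t ih =>
    intro u hu
    have hsub : {v | v ∈ t.support} ⊆ {v | v ∈ (SimpleGraph.Walk.cons hadj t).support} := by
      intro v hv; simp only [SimpleGraph.Walk.support_cons, Set.mem_setOf_eq, List.mem_cons]
      exact Or.inr hv
    have hstep : (H.induce {v | v ∈ (SimpleGraph.Walk.cons hadj t).support}).Adj
        ⟨a, (SimpleGraph.Walk.cons hadj t).start_mem_support⟩
        ⟨c, hsub t.start_mem_support⟩ := by exact hadj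
    rcases List.mem_cons.mp (by simpa using hu) with rfl | hu'
    · exact Reachable.refl _
    · exact hstep.reachable.trans (reach_mono hsub (ih u hu'))

private lemma walk_conn {a b : V} (q : H.Walk a b) :
    (H.induce {v | v ∈ q.support}).Connected := by
  rw [connected_iff_exists_forall_reachable]
  refine ⟨⟨a, q.start_mem_support⟩, fun w => ?_⟩
  obtain ⟨w, hw⟩ := w
  exact walk_reach q w hw

private lemma walk_conn' {a b : V} (q : H.Walk a b) {S : Set V}
    (hS : S = {v | v ∈ q.support}) : (H.induce S).Connected := by
  subst hS; exact walk_conn q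

private lemma del_head {a b : V} (q : H.Walk a b) (hq : q.support.Nodup) (hab : a ≠ b) :
    (H.induce ({w | w ∈ q.support} \ {a})).Connected := by
  cases q with
  | nil => exact absurd rfl hab
  | @cons _ c _ h t =>
    have hnd := hq
    simp only [SimpleGraph.Walk.support_cons, List.nodup_cons] at hnd
    refine walk_conn' t ?_
    ext w
    simp only [Set.mem_diff, Set.mem_setOf_eq, SimpleGraph.Walk.support_cons, List.mem_cons,
      Set.mem_singleton_iff]
    constructor
    · rintro ⟨rfl | hw, hne⟩
      · exact absurd rfl hne
      · exact hw
    · intro hw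
      exact ⟨Or.inr hw, fun hc => hnd.1 (hc ▸ hw)⟩

private lemma cyc_del {a b : V} (q : H.Walk a b) (hq : q.support.Nodup) (hab : a ≠ b)
    (hadj : H.Adj b a) (v : V) :
    (H.induce ({w | w ∈ q.support} \ {v})).Connected := by
  classical
  by_cases hv : v ∈ q.support
  · by_cases hva : v = a
    · subst hva; exact del_head q hq hab
    by_cases hvb : v = b
    · subst hvb
      have hset : {w | w ∈ q.support} \ {v} = {w | w ∈ q.reverse.support} \ {v} := by
        ext w; simp [SimpleGraph.Walk.support_reverse]
      rw [hset]
      exact del_head q.reverse (by simpa [SimpleGraph.Walk.support_reverse] using hq)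
        (Ne.symm hab)
    · -- internal vertex
      have hqp : q.IsPath := (SimpleGraph.Walk.isPath_def q).mpr hq
      have hq1 : (q.takeUntil v hv).IsPath := hqp.takeUntil hv
      have hq2 : (q.dropUntil v hv).IsPath := hqp.dropUntil hv
      have hsplit : q.support = (q.takeUntil v hv).support ++ (q.dropUntil v hv).support.tail := by
        conv_lhs => rw [← q.take_spec hv]
        exact SimpleGraph.Walk.support_append _ _
      rcases hd2 : q.dropUntil v hv with _ | @⟨_, w2, _, h2, t2⟩
      · exact absurd rfl hvb
      rcases hd1 : (q.takeUntil v hv).reverse with _ | @⟨_, w1, _, h1, t1⟩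
      · exact absurd rfl hva
      -- facts
      have hs2 : (q.dropUntil v hv).support = v :: t2.support := by
        rw [hd2, SimpleGraph.Walk.support_cons]
      have hvn2 : v ∉ t2.support := by
        have := hq2.2
        rw [hs2] at this
        exact (List.nodup_cons.mp this).1
      have hs1 : (q.takeUntil v hv).support.reverse = v :: t1.support := by
        rw [← SimpleGraph.Walk.support_reverse, hd1, SimpleGraph.Walk.support_cons]
      have hvn1 : v ∉ t1.support := by
        have := hq1.reverse.2
        rw [SimpleGraph.Walk.support_reverse, hs1] at this
        exact (List.nodup_cons.mp this).1
      have hmem1 : ∀ w, w ∈ (q.takeUntil v hv).support ↔ (w = v ∨ w ∈ t1.support) := by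
        intro w
        rw [← List.mem_reverse, hs1, List.mem_cons]
      refine walk_conn' (t2.append (SimpleGraph.Walk.cons hadj t1.reverse)) ?_
      ext w
      simp only [Set.mem_diff, Set.mem_setOf_eq, Set.mem_singleton_iff,
        SimpleGraph.Walk.support_append, SimpleGraph.Walk.support_cons, List.tail_cons,
        List.mem_append, SimpleGraph.Walk.support_reverse, List.mem_reverse]
      rw [hsplit]
      simp only [List.mem_append, hmem1 w, hs2, List.tail_cons]
      constructor
      · rintro ⟨(rfl | hw) | hw, hne⟩
        · exact absurd rfl hne
        · exact Or.inr hw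
        · exact Or.inl hw
      · rintro (hw | hw)
        · exact ⟨Or.inr hw, fun hc => hvn2 (hc ▸ hw)⟩
        · exact ⟨Or.inl (Or.inr hw), fun hc => hvn1 (hc ▸ hw)⟩
  · refine walk_conn' q ?_
    ext w
    simp only [Set.mem_diff, Set.mem_setOf_eq, Set.mem_singleton_iff]
    exact ⟨fun h => h.1, fun h => ⟨h, fun hc => hv (hc ▸ h)⟩⟩

end Aux

section Aux2
open SimpleGraph Sum

variable {V : Type*} {H : SimpleGraph V} {f : Finset V → ℕ}

@[simp] lemma bip_adj_inl_inr {x : V} {p : Σ K : CliqueSet H, Fin (f K.1)} :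
    (Bip H f).Adj (inl x) (inr p) ↔ x ∈ p.1.1 := by
  constructor
  · rintro (⟨x', p', h1, h2, hm⟩ | ⟨x', p', h1, h2, hm⟩)
    · cases h1; cases h2; exact hm
    · exact absurd h1 (by simp)
  · intro hm; exact Or.inl ⟨x, p, rfl, rfl, hm⟩

@[simp] lemma bip_adj_inr_inl {x : V} {p : Σ K : CliqueSet H, Fin (f K.1)} :
    (Bip H f).Adj (inr p) (inl x) ↔ x ∈ p.1.1 := by
  rw [SimpleGraph.adj_comm]; exact bip_adj_inl_inr

@[simp] lemma bip_not_adj_inl_inl {x y : V} : ¬ (Bip H f).Adj (inl x) (inl y) := by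
  rintro (⟨x', p', h1, h2, hm⟩ | ⟨x', p', h1, h2, hm⟩) <;> simp_all

@[simp] lemma bip_not_adj_inr_inr {p q : Σ K : CliqueSet H, Fin (f K.1)} :
    ¬ (Bip H f).Adj (inr p) (inr q) := by
  rintro (⟨x', p', h1, h2, hm⟩ | ⟨x', p', h1, h2, hm⟩) <;> simp_all

lemma bip_adj_inl {x : V} {b : BVert H f} (h : (Bip H f).Adj (inl x) b) :
    ∃ p : Σ K : CliqueSet H, Fin (f K.1), b = inr p ∧ x ∈ p.1.1 := by
  cases b with
  | inl y => exact absurd h bip_not_adj_inl_inl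
  | inr p => exact ⟨p, rfl, bip_adj_inl_inr.mp h⟩

lemma bip_adj_inr {b : BVert H f} {p : Σ K : CliqueSet H, Fin (f K.1)}
    (h : (Bip H f).Adj (inr p) b) :
    ∃ x : V, b = inl x ∧ x ∈ p.1.1 := by
  cases b with
  | inl y => exact ⟨y, rfl, bip_adj_inr_inl.mp h⟩
  | inr q => exact absurd h bip_not_adj_inr_inr

/-- Lift an H-walk to a Bip-walk. -/
lemma lift_walk
    (hedge : ∀ u v : V, H.Adj u v → ∃ K : Finset V, IsCliqueF H K ∧ u ∈ K ∧ v ∈ K ∧ 1 ≤ f K)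
    {u v : V} (w : H.Walk u v) :
    ∃ Ω : (Bip H f).Walk (inl u) (inl v),
      ∀ z, Sum.inl z ∈ Ω.support → z ∈ w.support := by
  induction w with
  | nil => exact ⟨SimpleGraph.Walk.nil, by simp⟩
  | @cons a c b hadj t ih =>
    obtain ⟨Ω, hΩ⟩ := ih
    obtain ⟨K, hK, ha, hc, hf⟩ := hedge a c hadj
    refine ⟨SimpleGraph.Walk.cons
      (bip_adj_inl_inr (p := ⟨⟨K, hK⟩, ⟨0, hf⟩⟩).mpr ha)
      (SimpleGraph.Walk.cons (bip_adj_inr_inl (p := ⟨⟨K, hK⟩, ⟨0, hf⟩⟩).mpr hc) Ω), ?_⟩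
    intro z hz
    simp only [SimpleGraph.Walk.support_cons, List.mem_cons] at hz
    rcases hz with h | h | h
    · cases h; simp
    · exact absurd h (by simp)
    · simp [hΩ z h]

/-- Project a Bip-walk between two A-vertices down to an H-walk. -/
lemma proj_walk : ∀ (n : ℕ) (x y : V) (Wk : (Bip H f).Walk (inl x) (inl y)),
    Wk.length = n → Wk.support.Nodup →
    ∃ q : H.Walk x y, q.support.Nodup ∧ (∀ v ∈ q.support, Sum.inl v ∈ Wk.support) ∧
      (∀ d ∈ q.darts, ∃ pp : Σ K : CliqueSet H, Fin (f K.1),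
        Sum.inr pp ∈ Wk.support ∧ d.toProd.1 ∈ pp.1.1 ∧ d.toProd.2 ∈ pp.1.1) := by
  intro n
  induction n using Nat.strong_induction_on with
  | _ n ih =>
    intro x y Wk hlen hnd
    cases Wk with
    | nil => exact ⟨SimpleGraph.Walk.nil, by simp, by simp, by simp⟩
    | @cons _ b _ h W1 =>
      obtain ⟨p, rfl, hxp⟩ := bip_adj_inl h
      cases W1 with
      | @cons _ b2 _ h2 W2 =>
        obtain ⟨x2, rfl, hx2⟩ := bip_adj_inr h2
        have hnd' := hnd
        simp only [SimpleGraph.Walk.support_cons, List.nodup_cons] at hnd'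
        obtain ⟨hx_not, hp_not, nd2⟩ := hnd'
        have hlen2 : W2.length < n := by
          subst hlen; simp [SimpleGraph.Walk.length_cons]
        obtain ⟨q2, hqnd, hqmem, hqdart⟩ := ih W2.length hlen2 x2 y W2 rfl nd2
        have hxx2 : x ≠ x2 := by
          rintro rfl
          exact hx_not (List.mem_cons.mpr (Or.inr (by simpa using W2.start_mem_support)))
        have hadj : H.Adj x x2 := p.1.2.2 x hxp x2 hx2 hxx2
        refine ⟨SimpleGraph.Walk.cons hadj q2, ?_, ?_, ?_⟩
        · simp only [SimpleGraph.Walk.support_cons, List.nodup_cons]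
          refine ⟨fun hmem => ?_, hqnd⟩
          exact hx_not (List.mem_cons.mpr (Or.inr (by simpa using hqmem x hmem)))
        · intro v hv
          simp only [SimpleGraph.Walk.support_cons, List.mem_cons] at hv ⊢
          rcases hv with rfl | hv
          · exact Or.inl rfl
          · exact Or.inr (Or.inr (by simpa using hqmem v hv))
        · intro d hd
          simp only [SimpleGraph.Walk.darts_cons, List.mem_cons] at hd
          rcases hd with rfl | hd
          · exact ⟨p, by simp, hxp, hx2⟩
          · obtain ⟨pp, hpm, h1, h2'⟩ := hqdart d hd
            refine ⟨pp, ?_, h1, h2'⟩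
            simp only [SimpleGraph.Walk.support_cons, List.mem_cons]
            exact Or.inr (Or.inr hpm)


end Aux2

section Aux3
open SimpleGraph Sum

variable {V : Type*} {H : SimpleGraph V}

/-- connected and no cutvertex -/
private def GoodSet (H : SimpleGraph V) (T : Set V) : Prop :=
  T.Nonempty ∧ (H.induce T).Connected ∧
    (∀ v ∈ T, T = {v} ∨ (H.induce (T \ {v})).Connected)

private lemma exists_block_superset [Fintype V] {T : Set V} (hT : GoodSet H T) :
    ∃ S : Set V, IsBlock H S ∧ T ⊆ S := by
  classical
  set s : Set (Finset V) := {U : Finset V | T ⊆ ↑U ∧ GoodSet H ↑U} with hs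
  have hU₀ : (Set.toFinite T).toFinset ∈ s := by
    constructor <;> rw [Set.Finite.coe_toFinset]
    · exact hT
  obtain ⟨U, hUs, hUmax⟩ :=
    Set.Finite.exists_maximalFor (fun U : Finset V => U.card) s (Set.toFinite s) ⟨_, hU₀⟩
  obtain ⟨hTU, hUne, hUconn, hUdel⟩ := hUs
  refine ⟨↑U, ⟨hUne, hUconn, hUdel, ?_⟩, hTU⟩
  intro T' hsub hconn' hdel'
  have hT'fin := Set.toFinite T'
  have hcoe : ↑hT'fin.toFinset = T' := Set.Finite.coe_toFinset _
  have hmem : hT'fin.toFinset ∈ s := by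
    rw [hs, Set.mem_setOf_eq, hcoe]
    exact ⟨hTU.trans hsub, hUne.mono hsub, hconn', hdel'⟩
  have hUsub : U ⊆ hT'fin.toFinset := by
    intro u hu
    rw [← Finset.mem_coe, hcoe]
    exact hsub hu
  have hcard := hUmax hmem (Finset.card_le_card hUsub)
  have : U = hT'fin.toFinset :=
    Finset.eq_of_subset_of_card_le hUsub hcard
  rw [this, hcoe]

private lemma block_eq_of_two_shared {S₁ S₂ : Set V}
    (h1 : IsBlock H S₁) (h2 : IsBlock H S₂)
    (hc1 : ∀ x ∈ S₁, ∀ y ∈ S₁, x ≠ y → H.Adj x y)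
    (hc2 : ∀ x ∈ S₂, ∀ y ∈ S₂, x ≠ y → H.Adj x y)
    {x y : V} (hx1 : x ∈ S₁) (hx2 : x ∈ S₂) (hy1 : y ∈ S₁) (hy2 : y ∈ S₂)
    (hxy : x ≠ y) : S₁ = S₂ := by
  classical
  have hadjz : ∀ z ∈ S₁ ∩ S₂, ∀ u ∈ S₁ ∪ S₂, u = z ∨ H.Adj u z := by
    rintro z ⟨hz1, hz2⟩ u hu
    by_cases huz : u = z
    · exact Or.inl huz
    · rcases hu with hu | hu
      · exact Or.inr (hc1 u hu z hz1 huz)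
      · exact Or.inr (hc2 u hu z hz2 huz)
  have hconn : (H.induce (S₁ ∪ S₂)).Connected :=
    conn_star (Or.inl hx1) (hadjz x ⟨hx1, hx2⟩)
  have hdel : ∀ v ∈ S₁ ∪ S₂, (S₁ ∪ S₂) = {v} ∨ (H.induce ((S₁ ∪ S₂) \ {v})).Connected := by
    intro v hv
    right
    set z : V := if v = x then y else x with hz
    have hzmem : z ∈ S₁ ∩ S₂ := by
      rw [hz]; split <;> exact ⟨by assumption, by assumption⟩
    have hzv : z ≠ v := by
      rw [hz]; split
      · subst ‹v = x›; exact (Ne.symm hxy)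
      · exact fun hc => ‹¬ v = x› hc.symm
    refine conn_star (z := z) ⟨Or.inl hzmem.1, fun hc => hzv (Set.mem_singleton_iff.mp hc)⟩ ?_
    rintro u ⟨hu, hune⟩
    exact hadjz z hzmem u hu
  have e1 : S₁ = S₁ ∪ S₂ :=
    h1.2.2.2 (S₁ ∪ S₂) Set.subset_union_left hconn hdel
  have e2 : S₂ = S₁ ∪ S₂ :=
    h2.2.2.2 (S₁ ∪ S₂) Set.subset_union_right hconn hdel
  rw [e1, ← e2]

end Aux3

section Aux4
open SimpleGraph Sum

variable {V : Type*} {H : SimpleGraph V} {f : Finset V → ℕ}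

/-- The 2-step walk x - (K,i) - y in the bipartization. -/
private def twoStep {x y : V} (p : Σ K : CliqueSet H, Fin (f K.1))
    (hx : x ∈ p.1.1) (hy : y ∈ p.1.1) : (Bip H f).Walk (inl x) (inl y) :=
  SimpleGraph.Walk.cons (bip_adj_inl_inr.mpr hx)
    (SimpleGraph.Walk.cons (bip_adj_inr_inl.mpr hy) SimpleGraph.Walk.nil)

private lemma twoStep_support {x y : V} (p : Σ K : CliqueSet H, Fin (f K.1))
    (hx : x ∈ p.1.1) (hy : y ∈ p.1.1) :
    (twoStep p hx hy).support = [inl x, inr p, inl y] := rfl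

private lemma twoStep_isPath {x y : V} (p : Σ K : CliqueSet H, Fin (f K.1))
    (hx : x ∈ p.1.1) (hy : y ∈ p.1.1) (hxy : x ≠ y) : (twoStep p hx hy).IsPath := by
  rw [SimpleGraph.Walk.isPath_def, twoStep_support]
  simp [hxy]

/-- In an acyclic bipartization, two B-vertices sharing two A-neighbours coincide. -/
private lemma fpos_unique (hac : (Bip H f).IsAcyclic)
    {p q : Σ K : CliqueSet H, Fin (f K.1)} {x y : V} (hxy : x ≠ y)
    (hxp : x ∈ p.1.1) (hyp : y ∈ p.1.1) (hxq : x ∈ q.1.1) (hyq : y ∈ q.1.1) : p = q := by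
  have h1 := twoStep_isPath p hxp hyp hxy
  have h2 := twoStep_isPath q hxq hyq hxy
  have := hac.path_unique ⟨twoStep p hxp hyp, h1⟩ ⟨twoStep q hxq hyq, h2⟩
  have hsupp := congrArg (fun P : (Bip H f).Path (inl x) (inl y) => P.1.support) this
  simp only [twoStep_support] at hsupp
  have := congrArg (fun l => l[1]?) hsupp
  simpa using this

/-- In an acyclic bipartization, every nontrivial clique has at most one copy. -/
private lemma f_le_one (hac : (Bip H f).IsAcyclic) (K : Finset V) (hK : IsCliqueF H K)
    (h2 : 2 ≤ K.card) : f K ≤ 1 := by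
  by_contra h
  push_neg at h
  obtain ⟨x, hx, y, hy, hxy⟩ := Finset.one_lt_card.mp h2
  have := fpos_unique hac hxy (p := ⟨⟨K, hK⟩, ⟨0, show 0 < f K by omega⟩⟩)
    (q := ⟨⟨K, hK⟩, ⟨1, show 1 < f K by omega⟩⟩) hx hy hx hy
  simp [Sigma.mk.inj_iff, Fin.ext_iff] at this

/-- In an acyclic bipartization (with the covering hypothesis), every nontrivial clique
is contained in an f-positive clique. -/
private lemma exists_common_clique (hac : (Bip H f).IsAcyclic)
    (hedge : ∀ u v : V, H.Adj u v → ∃ K : Finset V, IsCliqueF H K ∧ u ∈ K ∧ v ∈ K ∧ 1 ≤ f K)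
    (K : Finset V) (hK : IsCliqueF H K) (h2 : 2 ≤ K.card) :
    ∃ C : Finset V, IsCliqueF H C ∧ 1 ≤ f C ∧ K ⊆ C := by
  obtain ⟨x, hx, y, hy, hxy⟩ := Finset.one_lt_card.mp h2
  obtain ⟨C, hC, hxC, hyC, hfC⟩ := hedge x y (hK.2 x hx y hy hxy)
  refine ⟨C, hC, hfC, ?_⟩
  intro z hz
  by_cases hzx : z = x
  · exact hzx ▸ hxC
  by_cases hzy : z = y
  · exact hzy ▸ hyC
  obtain ⟨C₁, hC₁, hxC₁, hzC₁, hfC₁⟩ := hedge x z (hK.2 x hx z hz (Ne.symm hzx))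
  obtain ⟨C₂, hC₂, hzC₂, hyC₂, hfC₂⟩ := hedge z y (hK.2 z hz y hy hzy)
  set p : Σ K : CliqueSet H, Fin (f K.1) := ⟨⟨C, hC⟩, ⟨0, hfC⟩⟩ with hp
  set p₁ : Σ K : CliqueSet H, Fin (f K.1) := ⟨⟨C₁, hC₁⟩, ⟨0, hfC₁⟩⟩ with hp₁
  set p₂ : Σ K : CliqueSet H, Fin (f K.1) := ⟨⟨C₂, hC₂⟩, ⟨0, hfC₂⟩⟩ with hp₂
  by_cases h12 : p₁ = p₂
  · -- then C₁ contains x, z, y; and C₁ = C by uniqueness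
    have hyC₁ : y ∈ C₁ := by
      have : C₂ = C₁ := by
        have := congrArg (fun r : Σ K : CliqueSet H, Fin (f K.1) => r.1.1) h12
        exact this.symm
      exact this ▸ hyC₂
    have : p₁ = p := fpos_unique hac hxy hxC₁ hyC₁ hxC hyC
    have hCC : C₁ = C := congrArg (fun r : Σ K : CliqueSet H, Fin (f K.1) => r.1.1) this
    exact hCC ▸ hzC₁
  · exfalso
    have hP₂ : ((twoStep p₁ hxC₁ hzC₁).append (twoStep p₂ hzC₂ hyC₂)).support
        = [inl x, inr p₁, inl z, inr p₂, inl y] := by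
      rw [SimpleGraph.Walk.support_append, twoStep_support, twoStep_support]
      rfl
    have hpath : ((twoStep p₁ hxC₁ hzC₁).append (twoStep p₂ hzC₂ hyC₂)).IsPath := by
      rw [SimpleGraph.Walk.isPath_def, hP₂]
      simp [hxy, Ne.symm hzx, hzy, h12]
    have := hac.path_unique
      ⟨(twoStep p₁ hxC₁ hzC₁).append (twoStep p₂ hzC₂ hyC₂), hpath⟩
      ⟨twoStep p hxC hyC, twoStep_isPath p hxC hyC hxy⟩
    have hsupp := congrArg (fun P : (Bip H f).Path (inl x) (inl y) => P.1.support.length) this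
    simp only [hP₂, twoStep_support] at hsupp
    simp at hsupp
end Aux4

section Aux5
open SimpleGraph Sum

variable {V : Type*} {H : SimpleGraph V} {f : Finset V → ℕ}

/-- main forward lemma: under a tree bipartization, a connected set with no
cutvertex is a clique. -/
private lemma goodset_clique (ht : (Bip H f).IsTree)
    (hedge : ∀ u v : V, H.Adj u v → ∃ K : Finset V, IsCliqueF H K ∧ u ∈ K ∧ v ∈ K ∧ 1 ≤ f K)
    {T : Set V} (hconnT : (H.induce T).Connected)
    (hdelT : ∀ v ∈ T, T = {v} ∨ (H.induce (T \ {v})).Connected)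
    {x y : V} (hx : x ∈ T) (hy : y ∈ T) (hxy : x ≠ y) : H.Adj x y := by
  classical
  obtain ⟨hco, hac⟩ := (SimpleGraph.isTree_iff _).mp ht
  by_contra hnadj
  obtain ⟨Ω₀⟩ := hco.preconnected (inl x) (inl y)
  have hexists : ∃ p : (Bip H f).Walk (inl x) (inl y), p.IsPath := ⟨Ω₀.bypass, Ω₀.bypass_isPath⟩
  obtain ⟨p, hp⟩ := hexists
  cases p with
  | nil => exact hxy rfl
  | @cons _ b _ h₁ p₁ =>
    obtain ⟨pp, rfl, hxpp⟩ := bip_adj_inl h₁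
    cases p₁ with
    | @cons _ b₂ _ h₂ p₂ =>
      obtain ⟨v, rfl, hvpp⟩ := bip_adj_inr h₂
      by_cases hvy : v = y
      · subst hvy
        exact hnadj (pp.1.2.2 x hxpp v hvpp hxy)
      · have hnd := hp.support_nodup
        simp only [SimpleGraph.Walk.support_cons, List.nodup_cons] at hnd
        have hvx : v ≠ x := by
          rintro rfl
          exact hnd.1 (List.mem_cons.mpr (Or.inr (by simpa using p₂.start_mem_support)))
        have hpass : ∀ w : H.Walk x y, v ∈ w.support := by
          intro w
          obtain ⟨Ω, hΩ⟩ := lift_walk hedge w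
          have hbp : Ω.bypass = SimpleGraph.Walk.cons h₁ (SimpleGraph.Walk.cons h₂ p₂) := by
            have := hac.path_unique ⟨Ω.bypass, Ω.bypass_isPath⟩
              ⟨SimpleGraph.Walk.cons h₁ (SimpleGraph.Walk.cons h₂ p₂), hp⟩
            exact congrArg Subtype.val this
          apply hΩ
          apply Ω.support_bypass_subset
          rw [hbp]
          simp only [SimpleGraph.Walk.support_cons, List.mem_cons]
          exact Or.inr (Or.inr (by simpa using p₂.start_mem_support))
        have hTv : (H.induce (T \ {v})).Connected := by
          by_cases hvT : v ∈ T
          · rcases hdelT v hvT with hT1 | hc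
            · exact absurd (hT1 ▸ hx) (by simpa using Ne.symm hvx)
            · exact hc
          · have : T \ {v} = T := by
              ext w
              simp only [Set.mem_diff, Set.mem_singleton_iff]
              exact ⟨fun h => h.1, fun h => ⟨h, fun hc => hvT (hc ▸ h)⟩⟩
            rw [this]; exact hconnT
        obtain ⟨W'⟩ := hTv.preconnected ⟨x, hx, by simpa using Ne.symm hvx⟩
          ⟨y, hy, by simpa using Ne.symm hvy⟩
        have hmem := hpass (W'.map (SimpleGraph.Embedding.induce (T \ {v})).toHom)
        erw [SimpleGraph.Walk.support_map, List.mem_map] at hmem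
        obtain ⟨⟨u, hu⟩, _, hval⟩ := hmem
        exact hu.2 (by simpa using hval)

end Aux5

section Aux6
open SimpleGraph Sum

variable {V : Type*} {H : SimpleGraph V} {f : Finset V → ℕ}

private lemma clique_conn {C : Finset V} (hC : IsCliqueF H C) :
    (H.induce (↑C : Set V)).Connected := by
  obtain ⟨z, hz⟩ := hC.1
  refine conn_star (z := z) (by simpa using hz) ?_
  intro u hu
  by_cases huz : u = z
  · exact Or.inl huz
  · exact Or.inr (hC.2 u (by simpa using hu) z hz huz)

private lemma clique_del {C : Finset V} (hC : IsCliqueF H C) :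
    ∀ v ∈ (↑C : Set V), (↑C : Set V) = {v} ∨ (H.induce ((↑C : Set V) \ {v})).Connected := by
  classical
  intro v hv
  by_cases hex : ∃ z ∈ C, z ≠ v
  · obtain ⟨z, hz, hzv⟩ := hex
    right
    refine conn_star (z := z) ⟨by simpa using hz, by simpa using hzv⟩ ?_
    rintro u ⟨hu, hune⟩
    by_cases huz : u = z
    · exact Or.inl huz
    · exact Or.inr (hC.2 u (by simpa using hu) z hz huz)
  · push_neg at hex
    left
    ext w
    simp only [Set.mem_singleton_iff, Finset.mem_coe]
    exact ⟨fun hw => hex w hw, fun hw => hw ▸ (by simpa using hv)⟩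

private lemma clique_goodSet {C : Finset V} (hC : IsCliqueF H C) : GoodSet H (↑C : Set V) :=
  ⟨by simpa using hC.1, clique_conn hC, clique_del hC⟩

private lemma bip_connected [Fintype V] (hconn : H.Connected)
    (hedge : ∀ u v : V, H.Adj u v → ∃ K : Finset V, IsCliqueF H K ∧ u ∈ K ∧ v ∈ K ∧ 1 ≤ f K) :
    (Bip H f).Connected := by
  have hne : Nonempty V := hconn.nonempty
  obtain ⟨x₀⟩ := hne
  rw [connected_iff_exists_forall_reachable]
  have key : ∀ u : V, (Bip H f).Reachable (inl x₀) (inl u) := by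
    intro u
    obtain ⟨w⟩ := hconn.preconnected x₀ u
    obtain ⟨Ω, _⟩ := lift_walk hedge w
    exact ⟨Ω⟩
  refine ⟨inl x₀, fun w => ?_⟩
  cases w with
  | inl u => exact key u
  | inr p =>
    obtain ⟨z, hz⟩ := p.1.2.1
    exact (key z).trans (SimpleGraph.Adj.reachable (bip_adj_inl_inr.mpr hz))

private lemma bip_acyclic [Fintype V] [DecidableEq V]
    (hedge : ∀ u v : V, H.Adj u v → ∃ K : Finset V, IsCliqueF H K ∧ u ∈ K ∧ v ∈ K ∧ 1 ≤ f K)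
    (h1 : ∀ K : Finset V, IsCliqueF H K → 2 ≤ K.card → f K ≤ 1)
    (h2 : ∀ S : Set V, IsBlock H S → ∀ x ∈ S, ∀ y ∈ S, x ≠ y → H.Adj x y)
    (h3 : ∀ K : Finset V, IsCliqueF H K → 2 ≤ K.card → (f K = 1 ↔ IsBlock H ↑K)) :
    (Bip H f).IsAcyclic := by
  classical
  -- first, no cycles based at a B-vertex
  have main : ∀ (p₀ : Σ K : CliqueSet H, Fin (f K.1)) (c : (Bip H f).Walk (inr p₀) (inr p₀)),
      ¬ c.IsCycle := by
    intro p₀ c hcyc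
    cases c with
    | nil => simpa using hcyc.three_le_length
    | @cons _ b _ h rest =>
      obtain ⟨x₀, rfl, hx₀⟩ := bip_adj_inr h
      have hndrest : rest.support.Nodup := by
        have := hcyc.support_nodup
        simpa [SimpleGraph.Walk.support_cons] using this
      rcases hrev : rest.reverse with _ | @⟨_, bl, _, h₂, tail2⟩
      obtain ⟨xl, rfl, hxl⟩ := bip_adj_inr h₂
      have hrevnd : (SimpleGraph.Walk.cons h₂ tail2).support.Nodup := by
        rw [← hrev, SimpleGraph.Walk.support_reverse]
        exact List.nodup_reverse.mpr hndrest
      simp only [SimpleGraph.Walk.support_cons, List.nodup_cons] at hrevnd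
      obtain ⟨hp₀nt, hndt2⟩ := hrevnd
      have hxx : xl ≠ x₀ := by
        rintro rfl
        cases tail2 with
        | nil =>
          have := congrArg SimpleGraph.Walk.length hrev
          simp only [SimpleGraph.Walk.length_reverse, SimpleGraph.Walk.length_cons,
            SimpleGraph.Walk.length_nil] at this
          have h3l := hcyc.three_le_length
          simp only [SimpleGraph.Walk.length_cons, this] at h3l
          omega
        | @cons _ b₃ _ h₃ t₃ =>
          simp only [SimpleGraph.Walk.support_cons, List.nodup_cons] at hndt2
          exact hndt2.1 (by simpa using t₃.end_mem_support)
      obtain ⟨q, hqnd, hqmem, hqdart⟩ := proj_walk tail2.length xl x₀ tail2 rfl hndt2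
      have hadj : H.Adj x₀ xl := p₀.1.2.2 x₀ hx₀ xl hxl (Ne.symm hxx)
      -- the support of q is a connected set with no cutvertex
      have hgood : GoodSet H {w | w ∈ q.support} := by
        refine ⟨⟨xl, q.start_mem_support⟩, walk_conn q, fun v _ => Or.inr ?_⟩
        exact cyc_del q hqnd hxx hadj v
      obtain ⟨B, hB, hWB⟩ := exists_block_superset hgood
      -- get a dart of q
      have hdart : ∃ d, d ∈ q.darts := by
        cases q with
        | nil => exact absurd rfl hxx
        | cons hq t => exact ⟨_, List.mem_cons_self⟩
      obtain ⟨d, hd⟩ := hdart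
      obtain ⟨pp, hppmem, hdf, hds⟩ := hqdart d hd
      -- both cliques are nontrivial, hence blocks
      have hblock : ∀ (r : Σ K : CliqueSet H, Fin (f K.1)) (a b : V), a ∈ r.1.1 → b ∈ r.1.1 →
          a ≠ b → f r.1.1 = 1 ∧ IsBlock H ↑r.1.1 := by
        rintro r a b ha hb hab
        have hcard : 2 ≤ r.1.1.card := Finset.one_lt_card.mpr ⟨a, ha, b, hb, hab⟩
        have hfpos : 0 < f r.1.1 := r.2.pos
        have hfle := h1 r.1.1 r.1.2 hcard
        have hf1 : f r.1.1 = 1 := by omega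
        exact ⟨hf1, (h3 r.1.1 r.1.2 hcard).mp hf1⟩
      have hdne : d.toProd.1 ≠ d.toProd.2 := d.adj.ne
      obtain ⟨hf₁, hblk₁⟩ := hblock pp d.toProd.1 d.toProd.2 hdf hds hdne
      obtain ⟨hf₀, hblk₀⟩ := hblock p₀ x₀ xl hx₀ hxl (Ne.symm hxx)
      -- blocks are complete
      have hcB := h2 _ hB
      have hc₁ := h2 _ hblk₁
      have hc₀ := h2 _ hblk₀
      -- the two cliques coincide with B
      have he₁ : (↑pp.1.1 : Set V) = B :=
        block_eq_of_two_shared hblk₁ hB hc₁ hcB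
          (by simpa using hdf) (hWB (q.dart_fst_mem_support_of_mem_darts hd))
          (by simpa using hds) (hWB (q.dart_snd_mem_support_of_mem_darts hd)) hdne
      have he₀ : (↑p₀.1.1 : Set V) = B :=
        block_eq_of_two_shared hblk₀ hB hc₀ hcB
          (by simpa using hx₀) (hWB (by simpa using q.end_mem_support))
          (by simpa using hxl) (hWB (by simpa using q.start_mem_support)) (Ne.symm hxx)
      have hKeq : pp.1 = p₀.1 := Subtype.ext (Finset.coe_injective (he₁.trans he₀.symm))
      -- hence the two B-vertices coincide
      have hppeq : pp = p₀ := by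
        obtain ⟨K₁, i₁⟩ := pp
        obtain ⟨K₀, i₀⟩ := p₀
        simp only at hKeq
        subst hKeq
        simp only at hf₁ ⊢
        congr 1
        have hi₁ : (i₁ : ℕ) < 1 := lt_of_lt_of_le i₁.isLt (le_of_eq hf₁)
        have hi₀ : (i₀ : ℕ) < 1 := lt_of_lt_of_le i₀.isLt (le_of_eq hf₁)
        exact Fin.ext (by omega)
      exact hp₀nt (hppeq ▸ hppmem)
  -- now reduce the general case to a cycle based at a B-vertex
  intro v c hcyc
  cases v with
  | inr p₀ => exact main p₀ c hcyc
  | inl x =>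
    cases c with
    | nil => simpa using hcyc.three_le_length
    | @cons _ b _ h rest =>
      obtain ⟨p₀, rfl, _⟩ := bip_adj_inl h
      have hmem : (inr p₀ : BVert H f) ∈ (SimpleGraph.Walk.cons h rest).support := by
        simp [SimpleGraph.Walk.support_cons]
      exact main p₀ _ (hcyc.rotate hmem)

end Aux6

theorem bip_isTree_iff {V : Type*} [Fintype V] [DecidableEq V]
    (H : SimpleGraph V) (f : Finset V → ℕ) (hconn : H.Connected)
    (hedge : ∀ u v : V, H.Adj u v → ∃ K : Finset V, IsCliqueF H K ∧ u ∈ K ∧ v ∈ K ∧ 1 ≤ f K) :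
    (Bip H f).IsTree ↔
      ((∀ K : Finset V, IsCliqueF H K → 2 ≤ K.card → f K ≤ 1) ∧
       (∀ S : Set V, IsBlock H S → ∀ x ∈ S, ∀ y ∈ S, x ≠ y → H.Adj x y) ∧
       (∀ K : Finset V, IsCliqueF H K → 2 ≤ K.card → (f K = 1 ↔ IsBlock H ↑K))) := by
  classical
  constructor
  · intro ht
    obtain ⟨hco, hac⟩ := (SimpleGraph.isTree_iff _).mp ht
    refine ⟨f_le_one hac, ?_, ?_⟩
    · intro S hS x hx y hy hxy
      exact goodset_clique ht hedge hS.2.1 hS.2.2.1 hx hy hxy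
    · intro K hK h2
      constructor
      · intro hf1
        refine ⟨by simpa using hK.1, clique_conn hK, clique_del hK, ?_⟩
        intro T' hsub hconn' hdel'
        obtain ⟨x, hx, y, hy, hxy⟩ := Finset.one_lt_card.mp h2
        have hxT' : x ∈ T' := hsub (by simpa using hx)
        have hyT' : y ∈ T' := hsub (by simpa using hy)
        have hT'fin := Set.toFinite T'
        set Kt := hT'fin.toFinset with hKt
        have hKtcoe : ↑Kt = T' := Set.Finite.coe_toFinset _
        have hKtclique : IsCliqueF H Kt := by
          constructor
          · exact ⟨x, by rw [← Finset.mem_coe, hKtcoe]; exact hxT'⟩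
          · intro a ha b hb hab
            rw [← Finset.mem_coe, hKtcoe] at ha hb
            exact goodset_clique ht hedge hconn' hdel' ha hb hab
        have hKtcard : 2 ≤ Kt.card := by
          refine Finset.one_lt_card.mpr ⟨x, ?_, y, ?_, hxy⟩ <;>
            rw [← Finset.mem_coe, hKtcoe] <;> assumption
        obtain ⟨C, hC, hfC, hKtC⟩ := exists_common_clique hac hedge Kt hKtclique hKtcard
        have hxC : x ∈ C := hKtC (by rw [← Finset.mem_coe, hKtcoe]; exact hxT')
        have hyC : y ∈ C := hKtC (by rw [← Finset.mem_coe, hKtcoe]; exact hyT')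
        have hKeq := fpos_unique hac hxy
          (p := ⟨⟨C, hC⟩, ⟨0, hfC⟩⟩) (q := ⟨⟨K, hK⟩, ⟨0, show 0 < f K by omega⟩⟩) hxC hyC hx hy
        have hCK : C = K := congrArg (fun r : Σ K : CliqueSet H, Fin (f K.1) => r.1.1) hKeq
        apply Set.Subset.antisymm hsub
        intro t ht'
        have : t ∈ Kt := by rw [← Finset.mem_coe, hKtcoe] at *; exact ht'
        have : t ∈ C := hKtC this
        rw [hCK] at this
        exact Finset.mem_coe.mpr this
      · intro hblk
        obtain ⟨C, hC, hfC, hKC⟩ := exists_common_clique hac hedge K hK h2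
        have hcoe : (↑K : Set V) ⊆ ↑C := by exact_mod_cast hKC
        have heq := hblk.2.2.2 ↑C hcoe (clique_conn hC) (clique_del hC)
        have hKCeq : K = C := Finset.coe_injective heq
        have hle := f_le_one hac K hK h2
        rw [hKCeq] at hle ⊢
        omega
  · rintro ⟨h1, h2, h3⟩
    exact (SimpleGraph.isTree_iff _).mpr ⟨bip_connected hconn hedge, bip_acyclic hedge h1 h2 h3⟩
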